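/- Let K ≥ 1 and 0 ≤ β < 1/K. Let x' ∈ ℝ^K satisfy 0 < x'_1 < x'_2 < … < x'_K. Then every minimizer y* of y ↦ D_Ψ(y, x') over the set {y ∈ ℝ^K : yᵢ ≥ β for all i, Σᵢ yᵢ = 1} satisfies y*_1 ≤ y*_2 ≤ … ≤ y*_K. (Equivalently: if y is a feasible point with yᵢ > y_j for some indices i < j, then swapping the i-th and j-th coordinates of y produces a feasible point with strictly smaller objective value.) -/

import Mathlib

/-- The Bregman divergence induced by the unnormalized negative entropy
`Ψ(x) = Σᵢ (xᵢ ln xᵢ − xᵢ)`, i.e. `D_Ψ(y, x) = Σᵢ (yᵢ ln(yᵢ/xᵢ) − yᵢ + xᵢ)`. -/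
noncomputable def DPsi {K : ℕ} (y x : Fin K → ℝ) : ℝ :=
  ∑ i, (y i * Real.log (y i / x i) - y i + x i)

lemma mul_log_div' (t c : ℝ) (ht : 0 ≤ t) (hc : 0 < c) :
    t * Real.log (t / c) = t * Real.log t - t * Real.log c := by
  rcases eq_or_lt_of_le ht with h | h
  · simp [← h]
  · rw [Real.log_div h.ne' hc.ne', mul_sub]

/-- if `x'` is strictly increasing with positive entries, every minimizer of
`y ↦ D_Ψ(y, x')` over the `β`-truncated simplex has nondecreasing coordinates. -/
theorem bregman_projection_sorted (K : ℕ) (hK : 1 ≤ K) (β : ℝ)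
    (hβ0 : 0 ≤ β) (hβK : β < 1 / (K : ℝ))
    (x' : Fin K → ℝ) (hx'pos : ∀ i, 0 < x' i) (hx'mono : StrictMono x')
    (ystar : Fin K → ℝ)
    (hmemβ : ∀ i, β ≤ ystar i) (hmemsum : ∑ i, ystar i = 1)
    (hmin : ∀ y : Fin K → ℝ, (∀ i, β ≤ y i) → ∑ i, y i = 1 →
      DPsi ystar x' ≤ DPsi y x') :
    Monotone ystar := by
  intro i j hij
  by_contra hcon
  push_neg at hcon
  have hij' : i ≠ j := by rintro rfl; exact lt_irrefl _ hcon
  have hlt : i < j := lt_of_le_of_ne hij hij'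
  set a := ystar i with ha
  set b := ystar j with hb
  set y : Fin K → ℝ := ystar ∘ Equiv.swap i j with hy
  have hyk : ∀ k, k ≠ i → k ≠ j → y k = ystar k := by
    intro k h1 h2; simp [hy, Equiv.swap_apply_of_ne_of_ne h1 h2]
  have hyi : y i = b := by simp [hy, hb]
  have hyj : y j = a := by simp [hy, ha]
  have hsum : ∑ k, y k = 1 := by
    rw [hy]
    rw [show (∑ k, (ystar ∘ Equiv.swap i j) k) = ∑ k, ystar k from
      Equiv.sum_comp (Equiv.swap i j) ystar]
    exact hmemsum
  have hfeas : ∀ k, β ≤ y k := fun k => hmemβ _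
  have hb0 : 0 ≤ b := le_trans hβ0 (hmemβ j)
  have ha0 : 0 ≤ a := le_trans hβ0 (hmemβ i)
  have hkey : DPsi ystar x' - DPsi y x' = (a - b) * (Real.log (x' j) - Real.log (x' i)) := by
    unfold DPsi
    rw [← Finset.sum_sub_distrib]
    have hsub : (∑ k, ((ystar k * Real.log (ystar k / x' k) - ystar k + x' k)
        - (y k * Real.log (y k / x' k) - y k + x' k)))
        = ∑ k ∈ ({i, j} : Finset (Fin K)), ((ystar k * Real.log (ystar k / x' k) - ystar k + x' k)
        - (y k * Real.log (y k / x' k) - y k + x' k)) := by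
      refine (Finset.sum_subset (Finset.subset_univ _) ?_).symm
      intro k _ hk
      simp only [Finset.mem_insert, Finset.mem_singleton, not_or] at hk
      rw [hyk k hk.1 hk.2]
      ring
    rw [hsub, Finset.sum_pair hij', hyi, hyj, ← ha, ← hb,
      mul_log_div' a (x' i) ha0 (hx'pos i), mul_log_div' b (x' i) hb0 (hx'pos i),
      mul_log_div' a (x' j) ha0 (hx'pos j), mul_log_div' b (x' j) hb0 (hx'pos j)]
    ring
  have hpos : 0 < (a - b) * (Real.log (x' j) - Real.log (x' i)) := by
    apply mul_pos (sub_pos.mpr hcon)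
    exact sub_pos.mpr (Real.log_lt_log (hx'pos i) (hx'mono hlt))
  have := hmin y hfeas hsum
  linarith [hkey]
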